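/- For all real numbers a > 0 and b > 0, the complete elliptic integral G(a,b) = ∫₀^{π/2} dθ/√(a²cos²θ + b²sin²θ) is invariant under the Landen transformation, i.e. G(a,b) = G((a+b)/2, √(ab)). -/

import Mathlib

open MeasureTheory Set Real

/-- Tangent substitution: `∫₀^{π/2} dθ/√(a²cos²θ+b²sin²θ) = ∫₀^∞ dt/√((t²+a²)(t²+b²))`. -/
lemma landen_tan_sub (a b : ℝ) (ha : 0 < a) (hb : 0 < b) :
    ∫ θ in (0:ℝ)..(Real.pi / 2),
        1 / Real.sqrt (a ^ 2 * Real.cos θ ^ 2 + b ^ 2 * Real.sin θ ^ 2)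
      = ∫ t in Ioi (0:ℝ), 1 / Real.sqrt ((t ^ 2 + a ^ 2) * (t ^ 2 + b ^ 2)) := by
  have himg : (fun θ : ℝ => b * Real.tan θ) '' Ioo 0 (Real.pi / 2) = Ioi 0 := by
    ext y
    constructor
    · rintro ⟨θ, ⟨h1, h2⟩, rfl⟩
      exact mul_pos hb (Real.tan_pos_of_pos_of_lt_pi_div_two h1 h2)
    · intro hy
      refine ⟨Real.arctan (y / b), ⟨by simpa using Real.arctan_strictMono (div_pos hy hb),
        Real.arctan_lt_pi_div_two _⟩, ?_⟩
      show b * Real.tan (Real.arctan (y / b)) = y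
      rw [Real.tan_arctan]
      field_simp
  have hderiv : ∀ θ ∈ Ioo (0:ℝ) (Real.pi / 2),
      HasDerivWithinAt (fun θ : ℝ => b * Real.tan θ) (b * (1 / Real.cos θ ^ 2))
        (Ioo 0 (Real.pi / 2)) θ := by
    intro θ hθ
    have hcos : 0 < Real.cos θ := Real.cos_pos_of_mem_Ioo ⟨by linarith [hθ.1, Real.pi_pos], hθ.2⟩
    exact ((Real.hasDerivAt_tan hcos.ne').const_mul b).hasDerivWithinAt
  have hinj : InjOn (fun θ : ℝ => b * Real.tan θ) (Ioo 0 (Real.pi / 2)) := by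
    intro x hx y hy hxy
    have hxy' : Real.tan x = Real.tan y :=
      mul_left_cancel₀ hb.ne' hxy
    exact Real.injOn_tan ⟨by linarith [hx.1, Real.pi_pos], hx.2⟩
      ⟨by linarith [hy.1, Real.pi_pos], hy.2⟩ hxy'
  have key := integral_image_eq_integral_abs_deriv_smul measurableSet_Ioo hderiv hinj
    (fun t => 1 / Real.sqrt ((t ^ 2 + a ^ 2) * (t ^ 2 + b ^ 2)))
  rw [himg] at key
  rw [key, intervalIntegral.integral_of_le (by positivity : (0:ℝ) ≤ Real.pi / 2),
    MeasureTheory.integral_Ioc_eq_integral_Ioo]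
  refine setIntegral_congr_fun measurableSet_Ioo (fun θ hθ => ?_)
  have hcos : 0 < Real.cos θ := Real.cos_pos_of_mem_Ioo ⟨by linarith [hθ.1, Real.pi_pos], hθ.2⟩
  have hQ : 0 < a ^ 2 * Real.cos θ ^ 2 + b ^ 2 * Real.sin θ ^ 2 := by positivity
  have hsq : ((b * Real.tan θ) ^ 2 + a ^ 2) * ((b * Real.tan θ) ^ 2 + b ^ 2)
      = (Real.sqrt (a ^ 2 * Real.cos θ ^ 2 + b ^ 2 * Real.sin θ ^ 2)
          * (b / Real.cos θ ^ 2)) ^ 2 := by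
    rw [mul_pow (Real.sqrt (a ^ 2 * Real.cos θ ^ 2 + b ^ 2 * Real.sin θ ^ 2)),
      Real.sq_sqrt hQ.le]
    have hs : Real.sin θ ^ 2 = 1 - Real.cos θ ^ 2 := by
      have := Real.sin_sq_add_cos_sq θ; linarith
    have hs4 : Real.sin θ ^ 4 = (1 - Real.cos θ ^ 2) ^ 2 := by rw [← hs]; ring
    rw [Real.tan_eq_sin_div_cos, div_pow, mul_pow]
    field_simp
    rw [hs]
    ring
  rw [smul_eq_mul, hsq, Real.sqrt_sq (by positivity)]
  have habs : |b * (1 / Real.cos θ ^ 2)| = b * (1 / Real.cos θ ^ 2) :=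
    abs_of_pos (by positivity)
  rw [habs]
  have hD : 0 < Real.sqrt (a ^ 2 * Real.cos θ ^ 2 + b ^ 2 * Real.sin θ ^ 2) := Real.sqrt_pos.2 hQ
  field_simp

/-- Gauss substitution `u = (t - ab/t)/2`. -/
lemma landen_gauss_sub (a b : ℝ) (ha : 0 < a) (hb : 0 < b) :
    ∫ t in Ioi (0:ℝ),
        1 / Real.sqrt ((t ^ 2 + ((a + b) / 2) ^ 2) * (t ^ 2 + Real.sqrt (a * b) ^ 2))
      = ∫ t in Ioi (0:ℝ), 1 / Real.sqrt ((t ^ 2 + a ^ 2) * (t ^ 2 + b ^ 2)) := by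
  have hG2 : Real.sqrt (a * b) ^ 2 = a * b := Real.sq_sqrt (mul_pos ha hb).le
  set h : ℝ → ℝ :=
    fun u => 1 / Real.sqrt ((u ^ 2 + ((a + b) / 2) ^ 2) * (u ^ 2 + a * b)) with hh
  have hrw : (fun u : ℝ =>
      1 / Real.sqrt ((u ^ 2 + ((a + b) / 2) ^ 2) * (u ^ 2 + Real.sqrt (a * b) ^ 2))) = h := by
    funext u; rw [hh, hG2]
  rw [hrw]
  have habs : ∫ u : ℝ, h u = 2 * ∫ u in Ioi (0:ℝ), h u := by
    rw [← integral_comp_abs (f := h)]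
    refine integral_congr_ae (Filter.Eventually.of_forall fun u => ?_)
    simp [hh, sq_abs]
  have himg : (fun t : ℝ => (t - a * b / t) / 2) '' Ioi 0 = univ := by
    refine eq_univ_of_forall fun y => ?_
    set s : ℝ := Real.sqrt (y ^ 2 + a * b) with hs
    have hs2 : s ^ 2 = y ^ 2 + a * b := Real.sq_sqrt (by positivity)
    have hys : |y| < s := by
      rw [hs, ← Real.sqrt_sq_eq_abs]
      exact Real.sqrt_lt_sqrt (sq_nonneg y) (by nlinarith)
    have ht : 0 < y + s := by
      have := neg_abs_le y; linarith
    refine ⟨y + s, ht, ?_⟩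
    show (y + s - a * b / (y + s)) / 2 = y
    field_simp
    nlinarith
  have hderiv : ∀ t ∈ Ioi (0:ℝ),
      HasDerivWithinAt (fun t : ℝ => (t - a * b / t) / 2)
        ((1 + a * b / t ^ 2) / 2) (Ioi 0) t := by
    intro t ht
    have ht' : (t : ℝ) ≠ 0 := (mem_Ioi.1 ht).ne'
    have h1 : HasDerivAt (fun t : ℝ => (t - a * b / t) / 2)
        ((1 - a * b * (-(t ^ 2)⁻¹)) / 2) t := by
      simpa [div_eq_mul_inv] using
        (((hasDerivAt_id t).sub ((hasDerivAt_inv ht').const_mul (a * b))).div_const 2)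
    have : (1 - a * b * (-(t ^ 2)⁻¹)) / 2 = (1 + a * b / t ^ 2) / 2 := by
      field_simp
      ring
    rw [this] at h1
    exact h1.hasDerivWithinAt
  have hinj : InjOn (fun t : ℝ => (t - a * b / t) / 2) (Ioi 0) := by
    intro x hx y hy hxy
    rw [mem_Ioi] at hx hy
    simp only at hxy
    have h1 : (x - y) * (x * y + a * b) = 0 := by
      field_simp at hxy
      nlinarith [hxy]
    rcases mul_eq_zero.1 h1 with h | h
    · linarith
    · nlinarith [mul_pos hx hy, mul_pos ha hb]
  have key := integral_image_eq_integral_abs_deriv_smul measurableSet_Ioi hderiv hinj h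
  rw [himg, MeasureTheory.setIntegral_univ, habs] at key
  have keyr : (∫ t in Ioi (0:ℝ), |(1 + a * b / t ^ 2) / 2| • h ((t - a * b / t) / 2))
      = ∫ t in Ioi (0:ℝ), 2 * (1 / Real.sqrt ((t ^ 2 + a ^ 2) * (t ^ 2 + b ^ 2))) := by
    refine setIntegral_congr_fun measurableSet_Ioi fun t ht => ?_
    rw [mem_Ioi] at ht
    have hP : 0 < (t ^ 2 + a ^ 2) * (t ^ 2 + b ^ 2) := by positivity
    have hD : 0 < Real.sqrt ((t ^ 2 + a ^ 2) * (t ^ 2 + b ^ 2)) := Real.sqrt_pos.2 hP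
    have hsq : (((t - a * b / t) / 2) ^ 2 + ((a + b) / 2) ^ 2)
          * (((t - a * b / t) / 2) ^ 2 + a * b)
        = (Real.sqrt ((t ^ 2 + a ^ 2) * (t ^ 2 + b ^ 2))
            * ((t ^ 2 + a * b) / (4 * t ^ 2))) ^ 2 := by
      rw [mul_pow (Real.sqrt ((t ^ 2 + a ^ 2) * (t ^ 2 + b ^ 2))), Real.sq_sqrt hP.le]
      field_simp
      ring
    have hfpos : (0:ℝ) < (1 + a * b / t ^ 2) / 2 := by positivity
    rw [smul_eq_mul, abs_of_pos hfpos, hh]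
    simp only
    rw [hsq, Real.sqrt_sq (by positivity)]
    field_simp
    ring
  rw [keyr] at key
  rw [MeasureTheory.integral_const_mul] at key
  linarith [key]

theorem landen_elliptic_invariance (a b : ℝ) (ha : 0 < a) (hb : 0 < b) :
    ∫ θ in (0:ℝ)..(Real.pi / 2),
        1 / Real.sqrt (a ^ 2 * Real.cos θ ^ 2 + b ^ 2 * Real.sin θ ^ 2)
      = ∫ θ in (0:ℝ)..(Real.pi / 2),
        1 / Real.sqrt (((a + b) / 2) ^ 2 * Real.cos θ ^ 2
            + Real.sqrt (a * b) ^ 2 * Real.sin θ ^ 2) := by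
  have hM : (0:ℝ) < (a + b) / 2 := by linarith
  have hG : (0:ℝ) < Real.sqrt (a * b) := Real.sqrt_pos.2 (mul_pos ha hb)
  rw [landen_tan_sub a b ha hb, landen_tan_sub ((a + b) / 2) (Real.sqrt (a * b)) hM hG,
    landen_gauss_sub a b ha hb]
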